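/- arXiv:math/0012115 — 2 statements merged into one kernel-verified Lean document; each statement's English description precedes it below -/
import Mathlib

section
/- If a group G admits a sequence h₁, h₂, … of quasi-homomorphisms G → ℝ and a sequence of elements f₁, f₂, … ∈ G such that each hᵢ is unbounded on the cyclic subgroup generated by fᵢ but bounded on the cyclic subgroup generated by fⱼ for every j < i, then the classes [h₁], [h₂], … are linearly independent in the quotient of the space of quasi-homomorphisms of G by the bounded functions; in particular that quotient is infinite dimensional. -/
/-- A quasi-homomorphism: a function `h : G → ℝ` with finite defect. -/
def IsQuasiHom {G : Type*} [Group G] (h : G → ℝ) : Prop :=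
  ∃ D : ℝ, ∀ a b : G, |h (a * b) - h a - h b| ≤ D

/-- If `hᵢ` are quasi-homomorphisms and `fᵢ ∈ G` are such that each `hᵢ` is unbounded
on `⟨fᵢ⟩` but bounded on `⟨fⱼ⟩` for `j < i`, then the classes `[hᵢ]` are linearly
independent modulo bounded functions: any finite linear combination which is a
bounded function must have all coefficients zero.  In particular the quotient
`QH(G)` of the quasi-homomorphisms by the bounded functions is infinite dimensional. -/
theorem linearly_independent_quasiHoms {G : Type*} [Group G]
    (h : ℕ → G → ℝ) (f : ℕ → G)
    (hq : ∀ i, IsQuasiHom (h i))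
    (hunb : ∀ i, ¬ ∃ C : ℝ, ∀ n : ℤ, |h i (f i ^ n)| ≤ C)
    (hbdd : ∀ i j, j < i → ∃ C : ℝ, ∀ n : ℤ, |h i (f j ^ n)| ≤ C) :
    ∀ t : ℕ →₀ ℝ,
      (∃ C : ℝ, ∀ g : G, |∑ i ∈ t.support, t i * h i g| ≤ C) → t = 0 := by
  rintro t ⟨C, hC⟩
  by_contra ht
  have hne : t.support.Nonempty := Finsupp.support_nonempty_iff.mpr ht
  set j := t.support.min' hne with hjdef
  have hjmem : j ∈ t.support := t.support.min'_mem hne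
  have htj : t j ≠ 0 := Finsupp.mem_support_iff.mp hjmem
  have hb : ∀ i : ℕ, ∃ Ci : ℝ, i ∈ t.support → i ≠ j →
      ∀ n : ℤ, |h i (f j ^ n)| ≤ Ci := by
    intro i
    by_cases hi : i ∈ t.support ∧ i ≠ j
    · obtain ⟨Ci, hCi⟩ := hbdd i j
        (lt_of_le_of_ne (t.support.min'_le i hi.1) (Ne.symm hi.2))
      exact ⟨Ci, fun _ _ => hCi⟩
    · exact ⟨0, fun h1 h2 => absurd ⟨h1, h2⟩ hi⟩
  choose Ci hCi using hb
  set S := t.support.erase j with hSdef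
  set B := ∑ i ∈ S, |t i| * Ci i with hBdef
  apply hunb j
  refine ⟨(C + B) / |t j|, fun n => ?_⟩
  have hsplit : t j * h j (f j ^ n) =
      (∑ i ∈ t.support, t i * h i (f j ^ n)) - ∑ i ∈ S, t i * h i (f j ^ n) := by
    rw [hSdef, ← Finset.add_sum_erase _ _ hjmem]
    ring
  have hrest : |∑ i ∈ S, t i * h i (f j ^ n)| ≤ B := by
    refine le_trans (Finset.abs_sum_le_sum_abs _ _) ?_
    rw [hBdef]
    refine Finset.sum_le_sum fun i hi => ?_
    rw [abs_mul]
    have hiS : i ∈ t.support := Finset.mem_of_mem_erase hi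
    have hij : i ≠ j := Finset.ne_of_mem_erase hi
    exact mul_le_mul_of_nonneg_left (hCi i hiS hij n) (abs_nonneg _)
  have hkey : |t j * h j (f j ^ n)| ≤ C + B := by
    rw [hsplit]
    calc |_ - _| ≤ |∑ i ∈ t.support, t i * h i (f j ^ n)| +
          |∑ i ∈ S, t i * h i (f j ^ n)| := abs_sub _ _
      _ ≤ C + B := add_le_add (hC _) hrest
  have htj' : 0 < |t j| := abs_pos.mpr htj
  rw [abs_mul] at hkey
  rw [le_div_iff₀ htj']
  calc |h j (f j ^ n)| * |t j| = |t j| * |h j (f j ^ n)| := mul_comm _ _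
    _ ≤ C + B := hkey
end

section
/- In a δ-hyperbolic geodesic metric space, if γ is a path from x to y realizing the infimum of |α| - W·|α|_w over all paths α from x to y (where 0 < W < |w|), then γ is a (|w|/(|w|-W), 2W|w|/(|w|-W))-quasi-geodesic. -/
/-- The Gromov product `(x|y)_w`. -/
noncomputable def gromovProd {X : Type*} [MetricSpace X] (w x y : X) : ℝ :=
  (dist w x + dist w y - dist x y) / 2

/-- `X` is `δ`-hyperbolic (four-point condition). -/
def IsDeltaHyperbolic (X : Type*) [MetricSpace X] (δ : ℝ) : Prop :=
  ∀ w x y z : X, min (gromovProd w x y) (gromovProd w y z) - δ ≤ gromovProd w x z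

/-- `α` (restricted to `{0, …, n}`) is an edge path: consecutive points at distance 1. -/
def IsEdgePath {X : Type*} [MetricSpace X] (α : ℕ → X) (n : ℕ) : Prop :=
  ∀ i < n, dist (α i) (α (i + 1)) = 1

/-- There is a copy of the path `w` (of length `m`) in `α` starting at position `i`:
the subpath `α(i), …, α(i+m)` is isometric to `w(0), …, w(m)`. -/
def CopyAt {X : Type*} [MetricSpace X] (w : ℕ → X) (m : ℕ) (α : ℕ → X) (i : ℕ) : Prop :=
  ∀ j ≤ m, ∀ k ≤ m, dist (α (i + j)) (α (i + k)) = dist (w j) (w k)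

/-- `α` (of length `n`) contains `c` non-overlapping copies of `w` (of length `m`). -/
def HasCopies {X : Type*} [MetricSpace X] (w : ℕ → X) (m : ℕ) (α : ℕ → X) (n : ℕ)
    (c : ℕ) : Prop :=
  ∃ p : Fin c → ℕ, (∀ a : Fin c, p a + m ≤ n ∧ CopyAt w m α (p a)) ∧
    ∀ a b : Fin c, a < b → p a + m ≤ p b

/-- `|α|_w`: the maximal number of non-overlapping copies of `w` in `α`. -/
noncomputable def numCopies {X : Type*} [MetricSpace X] (w : ℕ → X) (m : ℕ)
    (α : ℕ → X) (n : ℕ) : ℕ :=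
  sSup {c : ℕ | HasCopies w m α n c}

/-- The quantity `|α| - W·|α|_w`. -/
noncomputable def pathCost {X : Type*} [MetricSpace X] (w : ℕ → X) (m : ℕ) (W : ℕ)
    (α : ℕ → X) (n : ℕ) : ℝ :=
  (n : ℝ) - (W : ℝ) * (numCopies w m α n : ℝ)

lemma gap_lemma {c m : ℕ} (p : Fin c → ℕ)
    (hp : ∀ a b : Fin c, a < b → p a + m ≤ p b) :
    ∀ d : ℕ, ∀ a b : Fin c, (a : ℕ) + d = (b : ℕ) → p a + m * d ≤ p b := by
  intro d
  induction d with
  | zero =>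
    intro a b h
    have : a = b := Fin.ext (by omega)
    subst this; simp
  | succ d ih =>
    intro a b h
    have hb' : (a : ℕ) + d < c := by omega
    have h1 := ih a ⟨(a : ℕ) + d, hb'⟩ rfl
    have h2 : p ⟨(a : ℕ) + d, hb'⟩ + m ≤ p b := by
      refine hp _ _ ?_
      rw [Fin.lt_def]
      simp only [Fin.val_mk]
      omega
    have h3 : m * (d + 1) = m * d + m := by ring
    omega


lemma edgePath_dist_le {X : Type*} [MetricSpace X] {γ : ℕ → X} {n : ℕ}
    (hγ : IsEdgePath γ n) :
    ∀ d i, i + d ≤ n → dist (γ i) (γ (i + d)) ≤ (d : ℝ) := by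
  intro d
  induction d with
  | zero => simp
  | succ d ih =>
    intro i h
    have h1 := ih i (by omega)
    have h2 := hγ (i + d) (by omega)
    have h3 : dist (γ i) (γ (i + (d + 1))) ≤
        dist (γ i) (γ (i + d)) + dist (γ (i + d)) (γ (i + d + 1)) := by
      rw [show i + (d + 1) = i + d + 1 from by ring]
      exact dist_triangle _ _ _
    push_cast
    linarith

lemma hasCopies_le {X : Type*} [MetricSpace X] {w : ℕ → X} {m : ℕ} {α : ℕ → X}
    {n c : ℕ} (hm : 1 ≤ m) (h : HasCopies w m α n c) : c ≤ n := by
  obtain ⟨p, h1, h2⟩ := h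
  rcases Nat.eq_zero_or_pos c with hc | hc
  · omega
  have hlt : c - 1 < c := by omega
  have hg := gap_lemma p h2 (c - 1) ⟨0, hc⟩ ⟨c - 1, hlt⟩ (by simp)
  have h3 := (h1 ⟨c - 1, hlt⟩).1
  have h4 : c - 1 ≤ m * (c - 1) := Nat.le_mul_of_pos_left _ hm
  omega

lemma hasCopies_zero {X : Type*} [MetricSpace X] (w : ℕ → X) (m : ℕ) (α : ℕ → X)
    (n : ℕ) : HasCopies w m α n 0 :=
  ⟨fun _ => 0, fun a => a.elim0, fun a _ _ => a.elim0⟩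

lemma le_numCopies {X : Type*} [MetricSpace X] {w : ℕ → X} {m : ℕ} {α : ℕ → X}
    {n c : ℕ} (hm : 1 ≤ m) (h : HasCopies w m α n c) : c ≤ numCopies w m α n :=
  le_csSup ⟨n, fun _ hc' => hasCopies_le hm hc'⟩ h

lemma numCopies_spec {X : Type*} [MetricSpace X] (w : ℕ → X) {m : ℕ} (α : ℕ → X)
    (n : ℕ) (hm : 1 ≤ m) : HasCopies w m α n (numCopies w m α n) :=
  Nat.sSup_mem (⟨0, hasCopies_zero w m α n⟩ : {c : ℕ | HasCopies w m α n c}.Nonempty)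
    ⟨n, fun _ hc' => hasCopies_le hm hc'⟩

set_option maxHeartbeats 2000000 in
lemma key_lower {X : Type*} [MetricSpace X]
    (hgeo : ∀ x y : X, ∃ (α : ℕ → X) (n : ℕ),
      α 0 = x ∧ α n = y ∧ IsEdgePath α n ∧ (n : ℝ) = dist x y)
    (w : ℕ → X) (m : ℕ) (W : ℕ) (hW1 : 0 < W) (hW2 : W < m)
    (x y : X) (γ : ℕ → X) (n : ℕ)
    (hγ0 : γ 0 = x) (hγn : γ n = y) (hγ : IsEdgePath γ n)
    (hmin : ∀ (α : ℕ → X) (k : ℕ), α 0 = x → α k = y → IsEdgePath α k →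
      pathCost w m W γ n ≤ pathCost w m W α k)
    (i j : ℕ) (hij : i ≤ j) (hjn : j ≤ n) :
    ((m : ℝ) - W) / m * ((j : ℝ) - i) - 2 * W ≤ dist (γ i) (γ j) := by
  have hm1 : 1 ≤ m := by omega
  obtain ⟨β, k, hβ0, hβk, hβ, hβd⟩ := hgeo (γ i) (γ j)
  -- k ≤ j - i
  have hdd : dist (γ i) (γ j) ≤ ((j : ℝ) - i) := by
    have := edgePath_dist_le hγ (j - i) i (by omega)
    rw [show i + (j - i) = j from by omega] at this
    have hc : ((j - i : ℕ) : ℝ) = (j : ℝ) - i := by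
      push_cast [Nat.cast_sub hij]; ring
    linarith [hc ▸ this]
  have hk_le : i + k ≤ j := by
    have h : (k : ℝ) ≤ (j : ℝ) - i := by rw [hβd]; exact hdd
    have h2 : ((i + k : ℕ) : ℝ) ≤ ((j : ℕ) : ℝ) := by push_cast; linarith
    exact_mod_cast h2
  set n' : ℕ := i + k + (n - j) with hn'
  set α : ℕ → X := fun t => if t ≤ i then γ t else if t ≤ i + k then β (t - i)
    else γ (t + j - (i + k)) with hα
  have αleft : ∀ t, t ≤ i → α t = γ t := by
    intro t ht; simp [hα, ht]
  have αmid : ∀ t, i ≤ t → t ≤ i + k → α t = β (t - i) := by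
    intro t ht1 ht2
    rcases eq_or_lt_of_le ht1 with h | h
    · subst h; simp [hα, hβ0]
    · simp [hα, Nat.not_le.mpr h, ht2]
  have αright : ∀ t, i + k ≤ t → α t = γ (t + j - (i + k)) := by
    intro t ht
    by_cases h1 : t ≤ i
    · have hti : t = i := le_antisymm h1 (by omega)
      have hk0 : k = 0 := by omega
      have : γ i = γ j := by
        have : dist (γ i) (γ j) = 0 := by rw [← hβd, hk0]; simp
        exact dist_eq_zero.mp this
      subst hti
      rw [αleft t le_rfl, this]
      congr 1; omega
    · by_cases h2 : t ≤ i + k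
      · have ht2 : t = i + k := le_antisymm h2 ht
        have : α t = β k := by
          rw [αmid t (by omega) h2]; congr 1; omega
        rw [this, hβk]; congr 1; omega
      · simp [hα, h1, h2]
  have hα0 : α 0 = x := by rw [αleft 0 (Nat.zero_le _), hγ0]
  have hαn' : α n' = y := by
    rw [αright n' (by omega), show n' + j - (i + k) = n from by omega, hγn]
  have hαedge : IsEdgePath α n' := by
    intro t ht
    by_cases h1 : t + 1 ≤ i
    · rw [αleft t (by omega), αleft (t + 1) h1]
      exact hγ t (by omega)
    · by_cases h2 : t + 1 ≤ i + k
      · rw [αmid t (by omega) (by omega), αmid (t + 1) (by omega) h2,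
          show t + 1 - i = (t - i) + 1 from by omega]
        exact hβ (t - i) (by omega)
      · rw [αright t (by omega), αright (t + 1) (by omega),
          show t + 1 + j - (i + k) = (t + j - (i + k)) + 1 from by omega]
        exact hγ (t + j - (i + k)) (by omega)
  -- copies of γ
  set c : ℕ := numCopies w m γ n with hcdef
  obtain ⟨p, hp1, hp2⟩ := numCopies_spec w γ n hm1
  set B : Finset (Fin c) := Finset.univ.filter (fun a => i < p a + m ∧ p a < j) with hB
  -- bound on B.card
  have hBbound : m * B.card + i ≤ j + 2 * m := by
    rcases B.eq_empty_or_nonempty with hBe | hBne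
    · rw [hBe]; simp; omega
    · set a₁ := B.min' hBne
      set a₂ := B.max' hBne
      have ha₁ : a₁ ∈ B := B.min'_mem hBne
      have ha₂ : a₂ ∈ B := B.max'_mem hBne
      have h12 : a₁ ≤ a₂ := B.min'_le _ ha₂
      have hm1' : i < p a₁ + m ∧ p a₁ < j := by
        simpa [hB] using ha₁
      have hm2' : i < p a₂ + m ∧ p a₂ < j := by
        simpa [hB] using ha₂
      have hgap := gap_lemma p hp2 ((a₂ : ℕ) - (a₁ : ℕ)) a₁ a₂ (by omega)
      have hsub : B ⊆ Finset.Icc a₁ a₂ := by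
        intro a ha
        rw [Finset.mem_Icc]
        exact ⟨B.min'_le a ha, B.le_max' a ha⟩
      have hcard : B.card ≤ (a₂ : ℕ) + 1 - (a₁ : ℕ) := by
        have := Finset.card_le_card hsub
        rwa [Fin.card_Icc] at this
      have hmul : m * B.card ≤ m * ((a₂ : ℕ) + 1 - (a₁ : ℕ)) :=
        Nat.mul_le_mul_left m hcard
      have hms : m * ((a₂ : ℕ) + 1 - (a₁ : ℕ)) = m * ((a₂ : ℕ) - (a₁ : ℕ)) + m := by
        rw [show (a₂ : ℕ) + 1 - (a₁ : ℕ) = ((a₂ : ℕ) - (a₁ : ℕ)) + 1 from by omega]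
        ring
      omega
  -- copies survive in α
  set A : Finset (Fin c) := Bᶜ with hA'
  have hAcard : A.card = c - B.card := by
    rw [hA', Finset.card_compl, Fintype.card_fin]
  have hAmem : ∀ a : Fin c, a ∈ A → p a + m ≤ i ∨ j ≤ p a := by
    intro a ha
    rw [hA', Finset.mem_compl, hB, Finset.mem_filter] at ha
    push_neg at ha
    by_cases h : i < p a + m
    · exact Or.inr (ha (Finset.mem_univ a) h)
    · exact Or.inl (by omega)
  have hcopα : HasCopies w m α n' A.card := by
    set e := A.orderIsoOfFin rfl with he
    refine ⟨fun a => if p (e a) + m ≤ i then p (e a) else p (e a) + (i + k) - j,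
      ?_, ?_⟩
    · intro a
      dsimp only
      have hmem := hAmem (e a) (e a).2
      have hcopy := (hp1 (e a)).2
      have hlen := (hp1 (e a)).1
      by_cases hsm : p (e a) + m ≤ i
      · rw [if_pos hsm]
        constructor
        · omega
        · intro j' hj' k' hk'
          rw [αleft (p (e a) + j') (by omega), αleft (p (e a) + k') (by omega)]
          exact hcopy j' hj' k' hk'
      · rw [if_neg hsm]
        have hjp : j ≤ p (e a) := by rcases hmem with h | h; omega; exact h
        constructor
        · omega
        · intro j' hj' k' hk'
          rw [αright (p (e a) + (i + k) - j + j') (by omega),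
            αright (p (e a) + (i + k) - j + k') (by omega),
            show p (e a) + (i + k) - j + j' + j - (i + k) = p (e a) + j' from by omega,
            show p (e a) + (i + k) - j + k' + j - (i + k) = p (e a) + k' from by omega]
          exact hcopy j' hj' k' hk'
    · intro a b hab
      have heab : (e a : Fin c) < (e b : Fin c) := by
        exact Subtype.coe_lt_coe.mpr (e.strictMono hab)
      have hpab := hp2 _ _ heab
      have hmema := hAmem (e a) (e a).2
      have hmemb := hAmem (e b) (e b).2
      dsimp only
      rcases hmema with h | h <;> rcases hmemb with h' | h' <;>
        (split_ifs <;> omega)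
  have hcα : A.card ≤ numCopies w m α n' := le_numCopies hm1 hcopα
  have hBc : B.card ≤ c := by
    have := Finset.card_le_univ B
    simpa using this
  -- assemble
  have hmincost := hmin α n' hα0 hαn' hαedge
  rw [pathCost, pathCost, ← hcdef] at hmincost
  set cα : ℕ := numCopies w m α n' with hcα'
  have r2 : ((n' : ℕ) : ℝ) = (i : ℝ) + k + ((n : ℝ) - j) := by
    rw [hn']; push_cast [Nat.cast_sub hjn]; ring
  have r3 : (c : ℝ) ≤ (cα : ℝ) + (B.card : ℝ) := by
    have : c ≤ cα + B.card := by omega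
    exact_mod_cast this
  have r4 : (m : ℝ) * (B.card : ℝ) + i ≤ (j : ℝ) + 2 * m := by
    exact_mod_cast hBbound
  have hW0 : (0 : ℝ) ≤ (W : ℝ) := by positivity
  have hm0 : (0 : ℝ) < (m : ℝ) := by exact_mod_cast hm1
  have h5 : (W : ℝ) * c ≤ (W : ℝ) * cα + (W : ℝ) * B.card := by
    nlinarith [mul_le_mul_of_nonneg_left r3 hW0]
  have hck : (j : ℝ) - i - k ≤ (W : ℝ) * (B.card : ℝ) := by
    linarith [hmincost, r2, h5]
  have hmk : (m : ℝ) * ((j : ℝ) - i - k) ≤ (W : ℝ) * ((j : ℝ) - i) + 2 * W * m := by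
    have h6 : (m : ℝ) * ((j : ℝ) - i - k) ≤ (m : ℝ) * ((W : ℝ) * B.card) :=
      mul_le_mul_of_nonneg_left hck (le_of_lt hm0)
    have h7 : (W : ℝ) * ((m : ℝ) * B.card) ≤ (W : ℝ) * ((j : ℝ) + 2 * m - i) :=
      mul_le_mul_of_nonneg_left (by linarith) hW0
    nlinarith
  have h8 : ((m : ℝ) - W) / m * ((j : ℝ) - i) - 2 * W ≤ (k : ℝ) := by
    rw [div_mul_eq_mul_div, sub_le_iff_le_add, div_le_iff₀ hm0]
    linear_combination hmk
  rw [hβd] at h8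
  exact h8

/-- Lemma (Fujiwara): in a `δ`-hyperbolic graph (a geodesic metric space whose
geodesics are edge paths), if the path `γ` from `x` to `y` realizes the infimum of
`|α| - W|α|_w` over all paths `α` from `x` to `y`, where `0 < W < |w| = m`, then `γ`
is a `(m/(m-W), 2Wm/(m-W))`-quasi-geodesic. -/
theorem minimizing_path_is_quasigeodesic {X : Type*} [MetricSpace X]
    (δ : ℝ) (hδ : 0 ≤ δ) (hX : IsDeltaHyperbolic X δ)
    (hgeo : ∀ x y : X, ∃ (α : ℕ → X) (n : ℕ),
      α 0 = x ∧ α n = y ∧ IsEdgePath α n ∧ (n : ℝ) = dist x y)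
    (w : ℕ → X) (m : ℕ) (hw : IsEdgePath w m)
    (W : ℕ) (hW1 : 0 < W) (hW2 : W < m)
    (x y : X) (γ : ℕ → X) (n : ℕ)
    (hγ0 : γ 0 = x) (hγn : γ n = y) (hγ : IsEdgePath γ n)
    (hmin : ∀ (α : ℕ → X) (k : ℕ), α 0 = x → α k = y → IsEdgePath α k →
      pathCost w m W γ n ≤ pathCost w m W α k) :
    ∀ i ≤ n, ∀ j ≤ n,
      ((m : ℝ) - W) / m * |(i : ℝ) - j| - 2 * W * m / ((m : ℝ) - W)
          ≤ dist (γ i) (γ j) ∧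
        dist (γ i) (γ j) ≤ (m : ℝ) / ((m : ℝ) - W) * |(i : ℝ) - j|
          + 2 * W * m / ((m : ℝ) - W) := by
  have key : ∀ i j : ℕ, i ≤ j → j ≤ n →
      ((m : ℝ) - W) / m * ((j : ℝ) - i) - 2 * W ≤ dist (γ i) (γ j) :=
    fun i j hij hjn =>
      key_lower hgeo w m W hW1 hW2 x y γ n hγ0 hγn hγ hmin i j hij hjn
  intro i hi j hj
  have hm0 : (0 : ℝ) < (m : ℝ) := by exact_mod_cast (by omega : 0 < m)
  have hmW : (0 : ℝ) < (m : ℝ) - W := by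
    have : (W : ℝ) < m := by exact_mod_cast hW2
    linarith
  have hW0 : (0 : ℝ) < (W : ℝ) := by exact_mod_cast hW1
  have hconst : 2 * (W : ℝ) ≤ 2 * W * m / ((m : ℝ) - W) := by
    rw [le_div_iff₀ hmW]
    nlinarith
  have habs : ∀ i' j' : ℕ, i' ≤ j' → j' ≤ n →
      dist (γ i') (γ j') ≤ (j' : ℝ) - i' := by
    intro i' j' h1 h2
    have := edgePath_dist_le hγ (j' - i') i' (by omega)
    rw [show i' + (j' - i') = j' from by omega] at this
    have hc : ((j' - i' : ℕ) : ℝ) = (j' : ℝ) - i' := by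
      push_cast [Nat.cast_sub h1]; ring
    linarith [hc ▸ this]
  rcases le_total i j with h | h
  · have hij : (i : ℝ) ≤ j := by exact_mod_cast h
    have habs' : |(i : ℝ) - j| = (j : ℝ) - i := by
      rw [abs_sub_comm, abs_of_nonneg (by linarith)]
    rw [habs']
    constructor
    · linarith [key i j h hj]
    · have hd := habs i j h hj
      have hcoef : 1 ≤ (m : ℝ) / ((m : ℝ) - W) := by
        rw [le_div_iff₀ hmW]; linarith
      have hj' : (0 : ℝ) ≤ (j : ℝ) - i := by linarith
      nlinarith [mul_le_mul_of_nonneg_right hcoef hj']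
  · have habs' : |(i : ℝ) - j| = (i : ℝ) - j := by
      rw [abs_of_nonneg (by
        have : (j : ℝ) ≤ i := by exact_mod_cast h
        linarith)]
    rw [habs', dist_comm]
    constructor
    · linarith [key j i h hi]
    · have hd := habs j i h hi
      have hcoef : 1 ≤ (m : ℝ) / ((m : ℝ) - W) := by
        rw [le_div_iff₀ hmW]; linarith
      have hj' : (0 : ℝ) ≤ (i : ℝ) - j := by
        have : (j : ℝ) ≤ i := by exact_mod_cast h
        linarith
      nlinarith [mul_le_mul_of_nonneg_right hcoef hj']
end
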